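/- Let d1, d2, σ1, σ2 and c11, c12, c21, c22 be positive constants satisfying the bistable condition σ1/c11 > σ2/c21 and σ2/c22 > σ1/c12, let θ ∈ ℝ, and let α > 0, β > 0 be arbitrary constants. Suppose (u, v) is a pair of nonnegative C² functions on ℝ satisfying the differential inequalities d1 u'' + θ u' + u(σ1 − c11 u − c12 v) ≤ 0 and d2 v'' + θ v' + v(σ2 − c21 u − c22 v) ≤ 0 on ℝ, with (u,v)(x) → (σ1/c11, 0) as x → −∞ and (u,v)(x) → (0, σ2/c22) as x → +∞. Then q(x) = d1 α u(x) + d2 β v(x) satisfies q(x) ≥ min[α σ2/(c21 d2), β σ1/(c12 d1)] · min[d1², d2²] for every x ∈ ℝ. -/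

import Mathlib

open Filter Set

lemma cross_right {f : ℝ → ℝ} {z0 lam L : ℝ} (hf : Continuous f)
    (h0 : f z0 < lam) (hL : Tendsto f atTop (nhds L)) (hlam : lam < L) :
    ∃ z2, z0 < z2 ∧ f z2 = lam ∧ ∀ x ∈ Set.Ico z0 z2, f x < lam := by
  obtain ⟨B, hB⟩ := (hL.eventually (eventually_gt_nhds hlam)).exists_forall_of_atTop
  have hSclosed : IsClosed {x | z0 ≤ x ∧ lam ≤ f x} := by
    have : {x | z0 ≤ x ∧ lam ≤ f x} = Ici z0 ∩ f ⁻¹' (Ici lam) := by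
      ext x; exact Iff.rfl
    rw [this]; exact isClosed_Ici.inter (isClosed_Ici.preimage hf)
  have hSne : Set.Nonempty {x | z0 ≤ x ∧ lam ≤ f x} :=
    ⟨max z0 B, le_max_left _ _, (hB _ (le_max_right _ _)).le⟩
  have hbdd : BddBelow {x | z0 ≤ x ∧ lam ≤ f x} := ⟨z0, fun x hx => hx.1⟩
  obtain ⟨hz2a, hz2b⟩ := hSclosed.csInf_mem hSne hbdd
  set z2 := sInf {x | z0 ≤ x ∧ lam ≤ f x} with hz2
  have hlt : ∀ x ∈ Set.Ico z0 z2, f x < lam := by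
    intro x hx
    by_contra h
    exact absurd (csInf_le hbdd ⟨hx.1, not_lt.mp h⟩) (not_le.mpr hx.2)
  have hz0lt : z0 < z2 := by
    rcases lt_or_eq_of_le hz2a with h | h
    · exact h
    · exfalso; rw [← h] at hz2b; exact absurd hz2b (not_le.mpr h0)
  have hle : f z2 ≤ lam := by
    have hmem : z2 ∈ closure (Ico z0 z2) := by
      rw [closure_Ico hz0lt.ne]; exact ⟨hz0lt.le, le_rfl⟩
    have hne : (nhdsWithin z2 (Ico z0 z2)).NeBot := mem_closure_iff_nhdsWithin_neBot.mp hmem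
    exact le_of_tendsto ((hf.tendsto z2).mono_left nhdsWithin_le_nhds)
      (eventually_nhdsWithin_of_forall (fun x hx => (hlt x hx).le))
  exact ⟨z2, hz0lt, le_antisymm hle hz2b, hlt⟩

lemma cross_left {f : ℝ → ℝ} {z0 lam L : ℝ} (hf : Continuous f)
    (h0 : f z0 < lam) (hL : Tendsto f atBot (nhds L)) (hlam : lam < L) :
    ∃ z1, z1 < z0 ∧ f z1 = lam ∧ ∀ x ∈ Set.Ioc z1 z0, f x < lam := by
  obtain ⟨z2, h1, h2, h3⟩ := cross_right (f := fun x => f (-x)) (z0 := -z0)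
    (hf.comp continuous_neg) (by simpa using h0) (hL.comp tendsto_neg_atTop_atBot) hlam
  refine ⟨-z2, by linarith, by simpa using h2, ?_⟩
  intro x hx
  have := h3 (-x) ⟨by linarith [hx.2], by linarith [hx.1]⟩
  simpa using this

lemma deriv_nonneg_right {f : ℝ → ℝ} {z0 z2 : ℝ} (hf : DifferentiableAt ℝ f z2)
    (h0 : z0 < z2) (hle : ∀ x ∈ Set.Ico z0 z2, f x ≤ f z2) : 0 ≤ deriv f z2 := by
  have h := (hf.hasDerivAt.hasDerivWithinAt (s := Iio z2))
  rw [hasDerivWithinAt_iff_tendsto_slope] at h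
  have hdiff : Iio z2 \ {z2} = Iio z2 := Set.diff_singleton_eq_self (by simp)
  rw [hdiff] at h
  have hne : (nhdsWithin z2 (Iio z2)).NeBot := nhdsLT_neBot z2
  refine ge_of_tendsto h (eventually_nhdsWithin_iff.mpr ?_)
  filter_upwards [eventually_gt_nhds h0] with x hx1 hx2
  have hxlt : x < z2 := hx2
  have hfle : f x ≤ f z2 := hle x ⟨hx1.le, hxlt⟩
  have hs : slope f z2 x = (f x - f z2) / (x - z2) := by rw [slope_def_field]
  rw [hs, div_nonneg_iff]
  right; constructor <;> linarith

lemma deriv_nonpos_left {f : ℝ → ℝ} {z0 z1 : ℝ} (hf : DifferentiableAt ℝ f z1)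
    (h0 : z1 < z0) (hle : ∀ x ∈ Set.Ioc z1 z0, f x ≤ f z1) : deriv f z1 ≤ 0 := by
  have h := (hf.hasDerivAt.hasDerivWithinAt (s := Ioi z1))
  rw [hasDerivWithinAt_iff_tendsto_slope] at h
  have hdiff : Ioi z1 \ {z1} = Ioi z1 := Set.diff_singleton_eq_self (by simp)
  rw [hdiff] at h
  have hne : (nhdsWithin z1 (Ioi z1)).NeBot := nhdsGT_neBot z1
  refine le_of_tendsto h (eventually_nhdsWithin_iff.mpr ?_)
  filter_upwards [eventually_lt_nhds h0] with x hx1 hx2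
  have hxgt : z1 < x := hx2
  have hfle : f x ≤ f z1 := hle x ⟨hxgt, hx1.le⟩
  have hs : slope f z1 x = (f x - f z1) / (x - z1) := by rw [slope_def_field]
  rw [hs, div_nonpos_iff]
  right; constructor <;> linarith

lemma final_contra {dmin dmax lam2 lamS qz0 p0 pz : ℝ} (hdmin : 0 < dmin) (hdmax : 0 < dmax)
    (hrel : lamS * dmax ≤ lam2 * dmin) (hq0 : qz0 < lamS) (hp0 : dmin * p0 ≤ qz0)
    (hpz : lam2 ≤ dmax * pz) (hle : pz ≤ p0) : False := by
  nlinarith [mul_lt_mul_of_pos_left hq0 hdmax, mul_le_mul_of_nonneg_left hpz hdmin.le,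
    mul_le_mul_of_nonneg_left hle (mul_pos hdmin hdmax).le,
    mul_le_mul_of_nonneg_left hp0 hdmax.le]

set_option maxHeartbeats 1600000 in
/-- Lower bound for `q(x) = d1 α u(x) + d2 β v(x)` for the unscaled two-species
Lotka-Volterra system under the bistable condition [BiS]. -/
theorem lv_unscaled_lower_bound_q
    (d1 d2 σ1 σ2 c11 c12 c21 c22 θ α β : ℝ)
    (hd1 : 0 < d1) (hd2 : 0 < d2) (hσ1 : 0 < σ1) (hσ2 : 0 < σ2)
    (hc11 : 0 < c11) (hc12 : 0 < c12) (hc21 : 0 < c21) (hc22 : 0 < c22)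
    (hBiS1 : σ1 / c11 > σ2 / c21) (hBiS2 : σ2 / c22 > σ1 / c12)
    (hα : 0 < α) (hβ : 0 < β)
    (u v : ℝ → ℝ)
    (hu : ContDiff ℝ 2 u) (hv : ContDiff ℝ 2 v)
    (hu0 : ∀ x, 0 ≤ u x) (hv0 : ∀ x, 0 ≤ v x)
    (hequ : ∀ x, d1 * deriv (deriv u) x + θ * deriv u x
      + u x * (σ1 - c11 * u x - c12 * v x) ≤ 0)
    (heqv : ∀ x, d2 * deriv (deriv v) x + θ * deriv v x
      + v x * (σ2 - c21 * u x - c22 * v x) ≤ 0)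
    (huM : Tendsto u atBot (nhds (σ1 / c11))) (hvM : Tendsto v atBot (nhds 0))
    (huP : Tendsto u atTop (nhds 0)) (hvP : Tendsto v atTop (nhds (σ2 / c22))) :
    ∀ x : ℝ,
      min (α * σ2 / (c21 * d2)) (β * σ1 / (c12 * d1)) * min (d1 ^ 2) (d2 ^ 2)
        ≤ d1 * α * u x + d2 * β * v x := by
  -- setup
  set lamS := min (α * σ2 / (c21 * d2)) (β * σ1 / (c12 * d1)) * min (d1 ^ 2) (d2 ^ 2) with hlamS
  set lam2 := min (α * σ2 * d1 / c21) (β * σ1 * d2 / c12) with hlam2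
  set q : ℝ → ℝ := fun x => d1 * α * u x + d2 * β * v x with hq
  set p : ℝ → ℝ := fun x => α * u x + β * v x with hp
  have hlam2pos : 0 < lam2 := lt_min (by positivity) (by positivity)
  have hBi1 : σ2 * c11 < σ1 * c21 := (div_lt_div_iff₀ hc21 hc11).mp hBiS1
  have hBi2 : σ1 * c22 < σ2 * c12 := (div_lt_div_iff₀ hc12 hc22).mp hBiS2
  -- relation between the two barrier constants
  have hrel : lamS * max d1 d2 ≤ lam2 * min d1 d2 := by
    rcases le_total (α * σ2 * d1 / c21) (β * σ1 * d2 / c12) with hAB | hAB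
    · rw [hlam2, min_eq_left hAB]
      have h1 : lamS ≤ α * σ2 / (c21 * d2) * min (d1 ^ 2) (d2 ^ 2) :=
        mul_le_mul_of_nonneg_right (min_le_left _ _) (le_of_lt (lt_min (by positivity) (by positivity)))
      have h2 : lamS * max d1 d2 ≤ α * σ2 / (c21 * d2) * min (d1 ^ 2) (d2 ^ 2) * max d1 d2 :=
        mul_le_mul_of_nonneg_right h1 (le_trans hd1.le (le_max_left _ _))
      refine le_trans h2 (le_of_eq ?_)
      rcases le_total d1 d2 with hd | hd
      · rw [min_eq_left (pow_le_pow_left₀ hd1.le hd 2), max_eq_right hd, min_eq_left hd]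
        field_simp
      · rw [min_eq_right (pow_le_pow_left₀ hd2.le hd 2), max_eq_left hd, min_eq_right hd]
        field_simp
    · rw [hlam2, min_eq_right hAB]
      have h1 : lamS ≤ β * σ1 / (c12 * d1) * min (d1 ^ 2) (d2 ^ 2) :=
        mul_le_mul_of_nonneg_right (min_le_right _ _) (le_of_lt (lt_min (by positivity) (by positivity)))
      have h2 : lamS * max d1 d2 ≤ β * σ1 / (c12 * d1) * min (d1 ^ 2) (d2 ^ 2) * max d1 d2 :=
        mul_le_mul_of_nonneg_right h1 (le_trans hd1.le (le_max_left _ _))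
      refine le_trans h2 (le_of_eq ?_)
      rcases le_total d1 d2 with hd | hd
      · rw [min_eq_left (pow_le_pow_left₀ hd1.le hd 2), max_eq_right hd, min_eq_left hd]
        field_simp
      · rw [min_eq_right (pow_le_pow_left₀ hd2.le hd 2), max_eq_left hd, min_eq_right hd]
        field_simp
  have hminpos : (0:ℝ) < min d1 d2 := lt_min hd1 hd2
  have hmaxpos : (0:ℝ) < max d1 d2 := lt_of_lt_of_le hd1 (le_max_left _ _)
  have hSle2 : lamS ≤ lam2 := by
    have := le_trans hrel (mul_le_mul_of_nonneg_left (min_le_max) hlam2pos.le)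
    exact le_of_mul_le_mul_right this hmaxpos
  -- differentiability
  have hu2 : ContDiff ℝ ((1 : ℕ) + 1) u := by exact_mod_cast hu
  have hv2 : ContDiff ℝ ((1 : ℕ) + 1) v := by exact_mod_cast hv
  have hu1 := (contDiff_succ_iff_deriv.mp hu2).2.2
  have hv1 := (contDiff_succ_iff_deriv.mp hv2).2.2
  have hud : Differentiable ℝ u := hu.differentiable two_ne_zero
  have hvd : Differentiable ℝ v := hv.differentiable two_ne_zero
  have hdud : Differentiable ℝ (deriv u) := hu1.differentiable (by norm_num)
  have hdvd : Differentiable ℝ (deriv v) := hv1.differentiable (by norm_num)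
  have hqder : ∀ x, HasDerivAt q (d1 * α * deriv u x + d2 * β * deriv v x) x := fun x =>
    (((hud x).hasDerivAt.const_mul (d1 * α)).add ((hvd x).hasDerivAt.const_mul (d2 * β)))
  have hqdiff : Differentiable ℝ q := fun x => (hqder x).differentiableAt
  have hqcont : Continuous q := hqdiff.continuous
  have hdq : ∀ x, deriv q x = d1 * α * deriv u x + d2 * β * deriv v x := fun x => (hqder x).deriv
  set Q : ℝ → ℝ := fun x => d1 * α * deriv u x + d2 * β * deriv v x + θ * (α * u x + β * v x)
    with hQ
  have hQder : ∀ x, HasDerivAt Q (d1 * α * deriv (deriv u) x + d2 * β * deriv (deriv v) x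
      + θ * (α * deriv u x + β * deriv v x)) x := fun x =>
    ((((hdud x).hasDerivAt.const_mul (d1 * α)).add ((hdvd x).hasDerivAt.const_mul (d2 * β)))).add
      ((((hud x).hasDerivAt.const_mul α).add ((hvd x).hasDerivAt.const_mul β)).const_mul θ)
  have hQdiff : Differentiable ℝ Q := fun x => (hQder x).differentiableAt
  have hQeq : ∀ x, Q x = deriv q x + θ * p x := fun x => by rw [hdq x]
  -- limits of q
  have hqBot : Tendsto q atBot (nhds (d1 * α * (σ1 / c11) + d2 * β * 0)) :=
    (huM.const_mul (d1 * α)).add (hvM.const_mul (d2 * β))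
  have hqTop : Tendsto q atTop (nhds (d1 * α * 0 + d2 * β * (σ2 / c22))) :=
    (huP.const_mul (d1 * α)).add (hvP.const_mul (d2 * β))
  have hlamBot : lam2 < d1 * α * (σ1 / c11) + d2 * β * 0 := by
    have h1 : lam2 ≤ α * σ2 * d1 / c21 := min_le_left _ _
    have h2 : α * σ2 * d1 / c21 < d1 * α * (σ1 / c11) := by
      rw [div_lt_iff₀ hc21, show d1 * α * (σ1 / c11) * c21 = d1 * α * (σ1 * c21) / c11 by ring,
        lt_div_iff₀ hc11]
      nlinarith [mul_pos (mul_pos hd1 hα) (sub_pos.mpr hBi1)]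
    linarith
  have hlamTop : lam2 < d1 * α * 0 + d2 * β * (σ2 / c22) := by
    have h1 : lam2 ≤ β * σ1 * d2 / c12 := min_le_right _ _
    have h2 : β * σ1 * d2 / c12 < d2 * β * (σ2 / c22) := by
      rw [div_lt_iff₀ hc12, show d2 * β * (σ2 / c22) * c12 = d2 * β * (σ2 * c12) / c22 by ring,
        lt_div_iff₀ hc22]
      nlinarith [mul_pos (mul_pos hd2 hβ) (sub_pos.mpr hBi2)]
    linarith
  -- the region where both reaction terms are nonnegative
  have hF : ∀ x, q x ≤ lam2 → 0 ≤ σ1 - c11 * u x - c12 * v x ∧ 0 ≤ σ2 - c21 * u x - c22 * v x := by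
    intro x hx
    have hA2 : lam2 * c21 ≤ α * σ2 * d1 := by
      have h := mul_le_mul_of_nonneg_right (min_le_left (α * σ2 * d1 / c21) (β * σ1 * d2 / c12)) hc21.le
      rwa [div_mul_cancel₀ _ hc21.ne'] at h
    have hB2 : lam2 * c12 ≤ β * σ1 * d2 := by
      have h := mul_le_mul_of_nonneg_right (min_le_right (α * σ2 * d1 / c21) (β * σ1 * d2 / c12)) hc12.le
      rwa [div_mul_cancel₀ _ hc12.ne'] at h
    have h1 : lam2 * c21 * (σ1 * u x) ≤ α * σ2 * d1 * (σ1 * u x) :=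
      mul_le_mul_of_nonneg_right hA2 (mul_nonneg hσ1.le (hu0 x))
    have h2 : lam2 * c12 * (σ2 * v x) ≤ β * σ1 * d2 * (σ2 * v x) :=
      mul_le_mul_of_nonneg_right hB2 (mul_nonneg hσ2.le (hv0 x))
    have h3 : σ1 * σ2 * (d1 * α * u x + d2 * β * v x) ≤ σ1 * σ2 * lam2 :=
      mul_le_mul_of_nonneg_left hx (mul_nonneg hσ1.le hσ2.le)
    have hkey : c21 * σ1 * u x + c12 * σ2 * v x ≤ σ1 * σ2 := by
      have h4 : lam2 * (c21 * σ1 * u x + c12 * σ2 * v x) ≤ lam2 * (σ1 * σ2) := by linarith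
      exact le_of_mul_le_mul_left h4 hlam2pos
    constructor
    · by_contra hcc
      push_neg at hcc
      have hb : σ2 * c11 * u x ≤ σ1 * c21 * u x := mul_le_mul_of_nonneg_right hBi1.le (hu0 x)
      have hneg : 0 < σ2 * (c11 * u x + c12 * v x - σ1) := mul_pos hσ2 (by linarith)
      linarith
    · by_contra hcc
      push_neg at hcc
      have hb : σ1 * c22 * v x ≤ σ2 * c12 * v x := mul_le_mul_of_nonneg_right hBi2.le (hv0 x)
      have hneg : 0 < σ1 * (c21 * u x + c22 * v x - σ2) := mul_pos hσ1 (by linarith)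
      linarith
  -- derivative of Q is nonpositive on the region q ≤ lam2
  have hQ' : ∀ x, q x ≤ lam2 → deriv Q x ≤ 0 := by
    intro x hx
    obtain ⟨hF1, hF2⟩ := hF x hx
    rw [(hQder x).deriv]
    linarith [mul_le_mul_of_nonneg_left (hequ x) hα.le, mul_le_mul_of_nonneg_left (heqv x) hβ.le,
      mul_nonneg (mul_nonneg hα.le (hu0 x)) hF1, mul_nonneg (mul_nonneg hβ.le (hv0 x)) hF2]
  -- antitone helper
  have hanti : ∀ s t : ℝ, s ≤ t → (∀ x ∈ Icc s t, q x ≤ lam2) → AntitoneOn Q (Icc s t) := by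
    intro s t hst hreg
    refine antitoneOn_of_deriv_nonpos (convex_Icc s t) hQdiff.continuous.continuousOn
      (hQdiff.differentiableOn) ?_
    intro x hx
    rw [interior_Icc] at hx
    exact hQ' x (hreg x ⟨hx.1.le, hx.2.le⟩)
  -- also for q itself (used when θ = 0)
  have hantiq : ∀ s t : ℝ, s ≤ t → (∀ x ∈ Icc s t, deriv q x ≤ 0) → AntitoneOn q (Icc s t) := by
    intro s t hst hreg
    refine antitoneOn_of_deriv_nonpos (convex_Icc s t) hqcont.continuousOn
      (hqdiff.differentiableOn) ?_
    intro x hx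
    rw [interior_Icc] at hx
    exact hreg x ⟨hx.1.le, hx.2.le⟩
  -- main argument
  intro xb
  by_contra hcon
  push_neg at hcon
  -- existence of a global minimum point z0
  have hBotev : ∀ᶠ x in atBot, q xb < q x :=
    hqBot.eventually (eventually_gt_nhds (lt_of_lt_of_le hcon (le_trans hSle2 hlamBot.le)))
  have hTopev : ∀ᶠ x in atTop, q xb < q x :=
    hqTop.eventually (eventually_gt_nhds (lt_of_lt_of_le hcon (le_trans hSle2 hlamTop.le)))
  obtain ⟨Ab, hAb⟩ := hBotev.exists_forall_of_atBot
  obtain ⟨Bt, hBt⟩ := hTopev.exists_forall_of_atTop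
  obtain ⟨z0, hz0I, hz0min⟩ := (isCompact_Icc (a := min Ab xb) (b := max Bt xb)).exists_isMinOn
    ⟨xb, ⟨min_le_right _ _, le_max_right _ _⟩⟩ hqcont.continuousOn
  have hz0xb : q z0 ≤ q xb := hz0min ⟨min_le_right _ _, le_max_right _ _⟩
  have hz0glob : ∀ y, q z0 ≤ q y := by
    intro y
    by_cases hy : y ∈ Icc (min Ab xb) (max Bt xb)
    · exact hz0min hy
    · rcases not_and_or.mp hy with h | h
      · push_neg at h
        exact le_trans hz0xb (hAb y (by linarith [min_le_left Ab xb])).le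
      · push_neg at h
        exact le_trans hz0xb (hBt y (by linarith [le_max_left Bt xb])).le
  have hq0 : q z0 < lamS := lt_of_le_of_lt hz0xb hcon
  have hq0' : q z0 < lam2 := lt_of_lt_of_le hq0 hSle2
  have hderivq0 : deriv q z0 = 0 :=
    (IsLocalMin.deriv_eq_zero (Filter.Eventually.of_forall hz0glob))
  -- pointwise comparison between q and p
  have hqp_min : ∀ x, min d1 d2 * p x ≤ q x := by
    intro x
    have h1 : min d1 d2 * (α * u x) ≤ d1 * (α * u x) :=
      mul_le_mul_of_nonneg_right (min_le_left _ _) (mul_nonneg hα.le (hu0 x))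
    have h2 : min d1 d2 * (β * v x) ≤ d2 * (β * v x) :=
      mul_le_mul_of_nonneg_right (min_le_right _ _) (mul_nonneg hβ.le (hv0 x))
    simp only [hq, hp]; linarith
  have hqp_max : ∀ x, q x ≤ max d1 d2 * p x := by
    intro x
    have h1 : d1 * (α * u x) ≤ max d1 d2 * (α * u x) :=
      mul_le_mul_of_nonneg_right (le_max_left _ _) (mul_nonneg hα.le (hu0 x))
    have h2 : d2 * (β * v x) ≤ max d1 d2 * (β * v x) :=
      mul_le_mul_of_nonneg_right (le_max_right _ _) (mul_nonneg hβ.le (hv0 x))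
    simp only [hq, hp]; linarith
  rcases lt_trichotomy θ 0 with hθ | hθ | hθ
  · -- θ < 0 : use left crossing
    obtain ⟨z1, hz10, hqz1, hqlt⟩ := cross_left hqcont hq0' hqBot hlamBot
    have hreg : ∀ x ∈ Icc z1 z0, q x ≤ lam2 := by
      intro x hx
      rcases eq_or_lt_of_le hx.1 with h | h
      · rw [← h, hqz1]
      · exact (hqlt x ⟨h, hx.2⟩).le
    have hQ21 : Q z0 ≤ Q z1 := hanti z1 z0 hz10.le hreg ⟨le_rfl, hz10.le⟩ ⟨hz10.le, le_rfl⟩ hz10.le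
    have hdz1 : deriv q z1 ≤ 0 := by
      refine deriv_nonpos_left (hqdiff z1) hz10 ?_
      intro x hx
      rw [hqz1]
      exact (hqlt x hx).le
    rw [hQeq z0, hQeq z1, hderivq0] at hQ21
    have hpz : θ * p z0 ≤ θ * p z1 := by linarith
    have hp10 : p z1 ≤ p z0 := (mul_le_mul_left_of_neg hθ).mp hpz
    exact final_contra hminpos hmaxpos hrel hq0 (hqp_min z0) (hqz1 ▸ hqp_max z1) hp10
  · -- θ = 0
    obtain ⟨z2, hz02, hqz2, hqlt⟩ := cross_right hqcont hq0' hqTop hlamTop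
    have hreg : ∀ x ∈ Icc z0 z2, q x ≤ lam2 := by
      intro x hx
      rcases eq_or_lt_of_le hx.2 with h | h
      · rw [h, hqz2]
      · exact (hqlt x ⟨hx.1, h⟩).le
    have hA := hanti z0 z2 hz02.le hreg
    have hderneg : ∀ x ∈ Icc z0 z2, deriv q x ≤ 0 := by
      intro x hx
      have hQx : Q x ≤ Q z0 := hA ⟨le_rfl, hz02.le⟩ hx hx.1
      rw [hQeq x, hQeq z0, hderivq0, hθ] at hQx
      simpa using hQx
    have := hantiq z0 z2 hz02.le hderneg ⟨le_rfl, hz02.le⟩ ⟨hz02.le, le_rfl⟩ hz02.le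
    rw [hqz2] at this
    linarith
  · -- θ > 0 : use right crossing
    obtain ⟨z2, hz02, hqz2, hqlt⟩ := cross_right hqcont hq0' hqTop hlamTop
    have hreg : ∀ x ∈ Icc z0 z2, q x ≤ lam2 := by
      intro x hx
      rcases eq_or_lt_of_le hx.2 with h | h
      · rw [h, hqz2]
      · exact (hqlt x ⟨hx.1, h⟩).le
    have hQ21 : Q z2 ≤ Q z0 := hanti z0 z2 hz02.le hreg ⟨le_rfl, hz02.le⟩ ⟨hz02.le, le_rfl⟩ hz02.le
    have hdz2 : 0 ≤ deriv q z2 := by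
      refine deriv_nonneg_right (hqdiff z2) hz02 ?_
      intro x hx
      rw [hqz2]
      exact (hqlt x hx).le
    rw [hQeq z2, hQeq z0, hderivq0] at hQ21
    have hpz : θ * p z2 ≤ θ * p z0 := by linarith
    have hp20 : p z2 ≤ p z0 := le_of_mul_le_mul_left hpz hθ
    exact final_contra hminpos hmaxpos hrel hq0 (hqp_min z0) (hqz2 ▸ hqp_max z2) hp20
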